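/- arXiv:2605.14222 — 4 statements merged into one kernel-verified Lean document; each statement's English description precedes it below -/
import Mathlib

section
/- Let K be an (n+m)×(n+m) real symmetric positive semidefinite matrix partitioned into blocks K₁₁ (n×n), K₁₂, K₂₁, K₂₂ (m×m), let σ² > 0, and define M = K + σ² I. Let N be the block matrix with top-left block (K₁₁ + σ² Iₙ)⁻¹ and zeros elsewhere. Then for any (n+m)×r matrix V, the matrix Vᵀ M⁻¹ V - Vᵀ N V is positive semidefinite. -/
open Matrix

private lemma psd_add_smul_one {k : Type*} [Fintype k] [DecidableEq k] (A : Matrix k k ℝ)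
    (hA : A.PosSemidef) (c : ℝ) (hc : 0 < c) : (A + c • 1).PosDef := by
  refine Matrix.posDef_iff_dotProduct_mulVec.mpr ⟨hA.1.add (by simp [Matrix.IsHermitian]), fun x hx => ?_⟩
  have h1 : (0:ℝ) < x ⬝ᵥ x := by
    simpa using Matrix.dotProduct_self_star_pos_iff.mpr hx
  have h2 := hA.dotProduct_mulVec_nonneg x
  simp only [star_trivial] at h2 ⊢
  have : x ⬝ᵥ (A + c • 1) *ᵥ x = x ⬝ᵥ A *ᵥ x + c * (x ⬝ᵥ x) := by
    simp [Matrix.add_mulVec, Matrix.smul_mulVec, dotProduct_add, dotProduct_smul,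
      smul_eq_mul]
  rw [this]
  have : 0 < c * (x ⬝ᵥ x) := mul_pos hc h1
  linarith

private lemma psd_fromBlocks22 {n m : ℕ} (S : Matrix (Fin m) (Fin m) ℝ)
    (hS : S.PosSemidef) :
    (fromBlocks (0 : Matrix (Fin n) (Fin n) ℝ) 0 0 S).PosSemidef := by
  rw [posSemidef_iff_dotProduct_mulVec]
  constructor
  · exact isHermitian_fromBlocks_iff.mpr ⟨isHermitian_zero, by simp, by simp, hS.1⟩
  · intro x
    have := hS.dotProduct_mulVec_nonneg (x ∘ Sum.inr)
    simpa [dotProduct, Matrix.mulVec, Fintype.sum_sum_type, fromBlocks] using this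

theorem stmt_3 {n m r : ℕ}
    (K₁₁ : Matrix (Fin n) (Fin n) ℝ) (K₁₂ : Matrix (Fin n) (Fin m) ℝ)
    (K₂₁ : Matrix (Fin m) (Fin n) ℝ) (K₂₂ : Matrix (Fin m) (Fin m) ℝ)
    (hK : (fromBlocks K₁₁ K₁₂ K₂₁ K₂₂).PosSemidef)
    (σ2 : ℝ) (hσ : 0 < σ2)
    (M : Matrix (Fin n ⊕ Fin m) (Fin n ⊕ Fin m) ℝ)
    (hM : M = fromBlocks K₁₁ K₁₂ K₂₁ K₂₂ + σ2 • 1)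
    (N : Matrix (Fin n ⊕ Fin m) (Fin n ⊕ Fin m) ℝ)
    (hN : N = fromBlocks (K₁₁ + σ2 • 1)⁻¹ 0 0 0)
    (V : Matrix (Fin n ⊕ Fin m) (Fin r) ℝ) :
    (Vᵀ * M⁻¹ * V - Vᵀ * N * V).PosSemidef := by
  -- K₂₁ = K₁₂ᴴ
  have hKh := hK.1
  rw [isHermitian_fromBlocks_iff] at hKh
  obtain ⟨hK11, hK12, hK21, hK22⟩ := hKh
  -- K₁₁ is PSD
  have hK11psd : K₁₁.PosSemidef := by
    have := hK.submatrix (Sum.inl : Fin n → Fin n ⊕ Fin m)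
    convert this using 1
    rfl
  set A := K₁₁ + σ2 • (1 : Matrix (Fin n) (Fin n) ℝ) with hAdef
  have hApd : A.PosDef := psd_add_smul_one K₁₁ hK11psd σ2 hσ
  haveI : Invertible A := hApd.isUnit.invertible
  set D := K₂₂ + σ2 • (1 : Matrix (Fin m) (Fin m) ℝ) with hDdef
  have hMblock : M = fromBlocks A K₁₂ K₁₂ᴴ D := by
    rw [hM, ← hK12]
    ext (i | i) (j | j) <;> simp [fromBlocks, Matrix.one_apply, hAdef, hDdef]
  have hMpd : M.PosDef := by
    rw [hM]
    exact psd_add_smul_one _ hK σ2 hσ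
  haveI : Invertible M := hMpd.isUnit.invertible
  have h1 : M⁻¹ * M = 1 := Matrix.inv_mul_of_invertible M
  have h2 : M * M⁻¹ = 1 := Matrix.mul_inv_of_invertible M
  -- Schur complement is PSD
  have hS : (D - K₁₂ᴴ * A⁻¹ * K₁₂).PosSemidef := by
    have := hMpd.posSemidef
    rw [hMblock] at this
    exact (Matrix.PosDef.fromBlocks₁₁ K₁₂ D hApd).mp this
  -- M - M * N * M is the zero-padded Schur complement
  have hMNM : M - M * N * M = fromBlocks 0 0 0 (D - K₁₂ᴴ * A⁻¹ * K₁₂) := by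
    rw [hN]
    nth_rewrite 1 [hMblock]
    nth_rewrite 1 [hMblock]
    nth_rewrite 1 [hMblock]
    rw [Matrix.fromBlocks_multiply, Matrix.fromBlocks_multiply]
    simp only [Matrix.mul_zero, Matrix.zero_mul, add_zero, zero_add,
      Matrix.mul_inv_of_invertible, Matrix.one_mul]
    ext (i | i) (j | j) <;>
      simp [fromBlocks, Matrix.mul_assoc, Matrix.inv_mul_of_invertible,
        Matrix.inv_mul_cancel_right_of_invertible]
  have hbig : (M - M * N * M).PosSemidef := by
    rw [hMNM]; exact psd_fromBlocks22 _ hS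
  have hkey : Vᵀ * M⁻¹ * V - Vᵀ * N * V = (M⁻¹ * V)ᴴ * (M - M * N * M) * (M⁻¹ * V) := by
    have hMinvH : (M⁻¹)ᴴ = M⁻¹ := hMpd.isHermitian.inv
    have hMinvT : (M⁻¹)ᵀ = M⁻¹ := by
      rw [← Matrix.conjTranspose_eq_transpose_of_trivial]; exact hMinvH
    have hmid : M⁻¹ * (M - M * N * M) * M⁻¹ = M⁻¹ - N := by
      have : M⁻¹ * (M - M * N * M) * M⁻¹
          = M⁻¹ * M * M⁻¹ - M⁻¹ * M * N * (M * M⁻¹) := by noncomm_ring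
      rw [this, h1, h2]
      simp [Matrix.one_mul, Matrix.mul_one]
    calc Vᵀ * M⁻¹ * V - Vᵀ * N * V
        = Vᴴ * (M⁻¹ - N) * V := by
          simp [Matrix.mul_sub, Matrix.sub_mul, Matrix.mul_assoc]
      _ = (M⁻¹ * V)ᴴ * (M - M * N * M) * (M⁻¹ * V) := by
          rw [← hmid]
          simp [Matrix.conjTranspose_mul, hMinvH, hMinvT, Matrix.mul_assoc]
  rw [hkey]
  exact hbig.conjTranspose_mul_mul_same (M⁻¹ * V)
end

section
/- Let K_f be an (n_j + n_k + n')×(n_j + n_k + n') real symmetric positive semidefinite matrix with diagonal blocks K_jj, K_kk, K_{k'k'} and off-diagonal blocks K_jk, K_jk', K_kk' (and transposes), and let σ_k² > 0. Define F_cc = K_jj - K_jk (K_kk + σ_k² I)⁻¹ K_kj and F = K_jj - (K_jk, K_jk') [ (K_kk, K_kk'; K_k'k, K_k'k') + σ_k² I ]⁻¹ (K_jk, K_jk')ᵀ. Then F_cc - F is positive semidefinite. -/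
open Matrix

theorem stmt_4 {nj nk n' : ℕ}
    (Kjj : Matrix (Fin nj) (Fin nj) ℝ)
    (Kjk : Matrix (Fin nj) (Fin nk) ℝ)
    (Kjk' : Matrix (Fin nj) (Fin n') ℝ)
    (Kkk : Matrix (Fin nk) (Fin nk) ℝ)
    (Kkk' : Matrix (Fin nk) (Fin n') ℝ)
    (Kk'k' : Matrix (Fin n') (Fin n') ℝ)
    (hKf : (fromBlocks Kjj (fromCols Kjk Kjk')
        (fromRows Kjkᵀ Kjk'ᵀ)
        (fromBlocks Kkk Kkk' Kkk'ᵀ Kk'k')).PosSemidef)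
    (σk2 : ℝ) (hσ : 0 < σk2)
    (Fcc F : Matrix (Fin nj) (Fin nj) ℝ)
    (hFcc : Fcc = Kjj - Kjk * (Kkk + σk2 • 1)⁻¹ * Kjkᵀ)
    (hF : F = Kjj - fromCols Kjk Kjk' *
        (fromBlocks Kkk Kkk' Kkk'ᵀ Kk'k' + σk2 • 1)⁻¹ *
        (fromCols Kjk Kjk')ᵀ) :
    (Fcc - F).PosSemidef := by
  subst hFcc hF
  -- Abbreviations
  set S : Matrix (Fin nk ⊕ Fin n') (Fin nk ⊕ Fin n') ℝ :=
    fromBlocks Kkk Kkk' Kkk'ᵀ Kk'k' with hSdef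
  -- S is PSD as a principal submatrix of the big PSD matrix
  have hS : S.PosSemidef := by
    have h1 := hKf.submatrix (Sum.inr : (Fin nk ⊕ Fin n') → _)
    have h2 : (fromBlocks Kjj (fromCols Kjk Kjk') (fromRows Kjkᵀ Kjk'ᵀ)
        S).submatrix (Sum.inr : (Fin nk ⊕ Fin n') → _) Sum.inr = S := by
      ext i j; simp [submatrix_apply]
    rwa [h2] at h1
  have hKkk : Kkk.PosSemidef := by
    have h1 := hS.submatrix (Sum.inl : Fin nk → _)
    have h2 : S.submatrix (Sum.inl : Fin nk → _) Sum.inl = Kkk := by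
      ext i j; simp [hSdef, submatrix_apply]
    rwa [h2] at h1
  -- Positive definiteness of the regularized matrices
  have hsm : ∀ (m : ℕ), (σk2 • (1 : Matrix (Fin m) (Fin m) ℝ)).PosDef := by
    intro m
    rw [smul_one_eq_diagonal]
    exact posDef_diagonal_iff.mpr fun _ => hσ
  have hsm' : (σk2 • (1 : Matrix (Fin nk ⊕ Fin n') (Fin nk ⊕ Fin n') ℝ)).PosDef := by
    rw [smul_one_eq_diagonal]
    exact posDef_diagonal_iff.mpr fun _ => hσ
  set A : Matrix (Fin nk) (Fin nk) ℝ := Kkk + σk2 • 1 with hAdef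
  set B : Matrix (Fin nk ⊕ Fin n') (Fin nk ⊕ Fin n') ℝ := S + σk2 • 1 with hBdef
  have hA : A.PosDef := Matrix.PosDef.posSemidef_add hKkk (hsm nk)
  have hB : B.PosDef := Matrix.PosDef.posSemidef_add hS hsm'
  -- Inverses and symmetry
  have hAinv : A * A⁻¹ = 1 := mul_nonsing_inv A hA.det_pos.ne'.isUnit
  have hBinvB : B⁻¹ * B = 1 := nonsing_inv_mul B hB.det_pos.ne'.isUnit
  have hBBinv : B * B⁻¹ = 1 := mul_nonsing_inv B hB.det_pos.ne'.isUnit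
  have hAiT : (A⁻¹)ᵀ = A⁻¹ := by
    have := hA.isHermitian.inv; simpa [conjTranspose, IsSymm] using this
  have hBiT : (B⁻¹)ᵀ = B⁻¹ := by
    have := hB.isHermitian.inv; simpa [conjTranspose, IsSymm] using this
  -- B as a block matrix with A in the corner
  have hBblocks : B = fromBlocks A Kkk' Kkk'ᵀ (Kk'k' + σk2 • 1) := by
    rw [hBdef, hSdef]
    ext (i | i) (j | j) <;> simp [hAdef, Matrix.add_apply, Matrix.smul_apply, Matrix.one_apply]
  -- The key factorization
  set M : Matrix (Fin nj) (Fin nk ⊕ Fin n') ℝ := fromCols Kjk Kjk' with hMdef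
  set R : Matrix (Fin nk ⊕ Fin n') (Fin nj) ℝ :=
    fromRows (A⁻¹ * Kjkᵀ) (0 : Matrix (Fin n') (Fin nj) ℝ) with hRdef
  set N : Matrix (Fin nk ⊕ Fin n') (Fin nj) ℝ := B⁻¹ * Mᵀ - R with hNdef
  have hMR : M * R = Kjk * A⁻¹ * Kjkᵀ := by
    rw [hMdef, hRdef, fromCols_mul_fromRows]
    simp [Matrix.mul_assoc]
  have hRT : Rᵀ = fromCols (Kjk * A⁻¹) 0 := by
    rw [hRdef, transpose_fromRows, transpose_mul, hAiT, transpose_zero, transpose_transpose]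
  have hBR : B * R = fromRows Kjkᵀ (Kkk'ᵀ * A⁻¹ * Kjkᵀ) := by
    rw [hBblocks, hRdef, fromBlocks_mul_fromRows]
    rw [← Matrix.mul_assoc, hAinv]
    simp [Matrix.mul_assoc]
  have hRBR : Rᵀ * (B * R) = Kjk * A⁻¹ * Kjkᵀ := by
    rw [hBR, hRT, fromCols_mul_fromRows]
    simp [Matrix.mul_assoc]
  have hNT : Nᵀ = M * B⁻¹ - Rᵀ := by
    rw [hNdef, transpose_sub, transpose_mul, transpose_transpose, hBiT]
  have hRM : Rᵀ * Mᵀ = Kjk * A⁻¹ * Kjkᵀ := by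
    rw [hRT, hMdef, transpose_fromCols, fromCols_mul_fromRows]
    simp [Matrix.mul_assoc]
  have hfact : Kjj - Kjk * A⁻¹ * Kjkᵀ - (Kjj - M * B⁻¹ * Mᵀ) = Nᵀ * B * N := by
    have e1 : Nᵀ * B = M - Rᵀ * B := by
      rw [hNT, Matrix.sub_mul, Matrix.mul_assoc, hBinvB, Matrix.mul_one]
    have e2 : Nᵀ * B * N = M * (B⁻¹ * Mᵀ) - M * R - (Rᵀ * B * (B⁻¹ * Mᵀ) - Rᵀ * B * R) := by
      rw [e1, hNdef, Matrix.sub_mul, Matrix.mul_sub, Matrix.mul_sub]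
    have e3 : Rᵀ * B * (B⁻¹ * Mᵀ) = Rᵀ * Mᵀ := by
      rw [Matrix.mul_assoc Rᵀ B (B⁻¹ * Mᵀ), ← Matrix.mul_assoc B B⁻¹ Mᵀ, hBBinv,
        Matrix.one_mul]
    have e4 : Rᵀ * B * R = Kjk * A⁻¹ * Kjkᵀ := by rw [Matrix.mul_assoc, hRBR]
    rw [e2, e3, e4, hMR, hRM, ← Matrix.mul_assoc M B⁻¹ Mᵀ]
    abel
  rw [hfact]
  have := hB.posSemidef.conjTranspose_mul_mul_same N
  simpa [conjTranspose_eq_transpose_of_trivial] using this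
end

section
/- Let B₁ = K + σ² I + F with K, F symmetric positive semidefinite n×n matrices, σ² > 0. Then for every v ∈ ℝⁿ and every κ such that the 1+n matrix [[κ, vᵀ],[v, K]] is positive semidefinite, vᵀ B₁⁻¹ F B₁⁻¹ v ≤ κ - vᵀ B₁⁻¹ v. -/
open Matrix

theorem stmt_12 {n : ℕ}
    (K F : Matrix (Fin n) (Fin n) ℝ)
    (hK : K.PosSemidef) (hF : F.PosSemidef)
    (σ2 : ℝ) (hσ : 0 < σ2)
    (B₁ : Matrix (Fin n) (Fin n) ℝ) (hB₁ : B₁ = K + σ2 • 1 + F)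
    (v : Fin n → ℝ) (κ : ℝ)
    (haug : (fromBlocks (κ • (1 : Matrix (Fin 1) (Fin 1) ℝ))
        (Matrix.of fun (_ : Fin 1) j => v j)
        (Matrix.of fun i (_ : Fin 1) => v i) K).PosSemidef) :
    v ⬝ᵥ (B₁⁻¹ * F * B₁⁻¹) *ᵥ v ≤ κ - v ⬝ᵥ B₁⁻¹ *ᵥ v := by
  have hBpd : B₁.PosDef := by
    rw [hB₁]
    have h1 : (σ2 • (1 : Matrix (Fin n) (Fin n) ℝ)).PosDef := by
      rw [Matrix.smul_one_eq_diagonal]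
      exact Matrix.posDef_diagonal_iff.mpr fun _ => hσ
    exact (Matrix.PosDef.posSemidef_add hK h1).add_posSemidef hF
  have hBinv : B₁⁻¹.PosDef := hBpd.inv
  have hBinvT : (B₁⁻¹)ᵀ = B₁⁻¹ := by
    have := hBinv.isHermitian
    rwa [Matrix.IsHermitian, Matrix.conjTranspose_eq_transpose_of_trivial] at this
  set w := B₁⁻¹ *ᵥ v with hw
  have hBw : B₁ *ᵥ w = v := by
    rw [hw, Matrix.mulVec_mulVec, Matrix.mul_nonsing_inv _ hBpd.det_pos.ne'.isUnit,
      Matrix.one_mulVec]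
  -- rewrite v ⬝ᵥ B₁⁻¹ *ᵥ v as v ⬝ᵥ w
  have hvw : v ⬝ᵥ B₁⁻¹ *ᵥ v = v ⬝ᵥ w := rfl
  -- key identity: v ⬝ᵥ w = wKw + σ2 (w⬝w) + wFw
  have h1 : v ⬝ᵥ w = w ⬝ᵥ K *ᵥ w + σ2 * (w ⬝ᵥ w) + w ⬝ᵥ F *ᵥ w := by
    calc v ⬝ᵥ w = (B₁ *ᵥ w) ⬝ᵥ w := by rw [hBw]
    _ = w ⬝ᵥ (B₁ *ᵥ w) := dotProduct_comm _ _
    _ = w ⬝ᵥ K *ᵥ w + σ2 * (w ⬝ᵥ w) + w ⬝ᵥ F *ᵥ w := by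
        rw [hB₁, Matrix.add_mulVec, Matrix.add_mulVec, dotProduct_add,
          dotProduct_add, Matrix.smul_mulVec, Matrix.one_mulVec,
          dotProduct_smul, smul_eq_mul]
  -- rewrite LHS as w ⬝ᵥ F *ᵥ w
  have h2 : v ⬝ᵥ (B₁⁻¹ * F * B₁⁻¹) *ᵥ v = w ⬝ᵥ F *ᵥ w := by
    rw [← Matrix.mulVec_mulVec, ← Matrix.mulVec_mulVec, Matrix.dotProduct_mulVec v B₁⁻¹,
      ← Matrix.mulVec_transpose, hBinvT]
  -- the augmented PSD inequality with vector (1, -w)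
  have haugq := haug.dotProduct_mulVec_nonneg (Sum.elim (fun (_ : Fin 1) => (1 : ℝ)) (fun i => -w i))
  have h3 : 0 ≤ κ - 2 * (v ⬝ᵥ w) + w ⬝ᵥ K *ᵥ w := by
    have hstar : star (Sum.elim (fun (_ : Fin 1) => (1 : ℝ)) (fun i => -w i)) =
        Sum.elim (fun (_ : Fin 1) => (1 : ℝ)) (fun i => -w i) := by
      funext i; cases i <;> simp
    rw [hstar, Matrix.fromBlocks_mulVec, sumElim_dotProduct_sumElim,
      Sum.elim_comp_inl, Sum.elim_comp_inr] at haugq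
    have e1 : ((fun _ => (1 : ℝ)) : Fin 1 → ℝ) ⬝ᵥ
        ((κ • (1 : Matrix (Fin 1) (Fin 1) ℝ)) *ᵥ (fun _ => (1 : ℝ)) +
          (Matrix.of fun (_ : Fin 1) j => v j) *ᵥ (fun i => -w i)) = κ - v ⬝ᵥ w := by
      simp [dotProduct, Matrix.mulVec, Fin.sum_univ_one, mul_comm,
        Finset.sum_neg_distrib, sub_eq_add_neg]
    have e2 : ((fun i => -w i) : Fin n → ℝ) ⬝ᵥ
        ((Matrix.of fun i (_ : Fin 1) => v i) *ᵥ (fun _ => (1 : ℝ)) + K *ᵥ (fun i => -w i)) =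
        -(v ⬝ᵥ w) + w ⬝ᵥ K *ᵥ w := by
      have hone : ((Matrix.of fun i (_ : Fin 1) => v i) *ᵥ (fun _ => (1 : ℝ))) = v := by
        funext i; simp [Matrix.mulVec, dotProduct, Fin.sum_univ_one]
      have hneg : ((fun i => -w i) : Fin n → ℝ) = -w := rfl
      rw [hneg, hone, neg_dotProduct, dotProduct_add, Matrix.mulVec_neg,
        dotProduct_neg, neg_add, neg_neg, dotProduct_comm w v]
    rw [e1, e2] at haugq
    linarith
  have hKq : 0 ≤ w ⬝ᵥ K *ᵥ w := hK.dotProduct_mulVec_nonneg w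
  have hFq : 0 ≤ w ⬝ᵥ F *ᵥ w := hF.dotProduct_mulVec_nonneg w
  have hww : 0 ≤ w ⬝ᵥ w := Finset.sum_nonneg fun i _ => mul_self_nonneg _
  have hσc : 0 ≤ σ2 * (w ⬝ᵥ w) := mul_nonneg hσ.le hww
  rw [h2, hvw]
  linarith
end

section
/- In a one-dimensional Gaussian conjugate setting, adding observations never increases posterior variance: if k̄(e,e) = k(e,e) - k(e,E) (k(E,E) + σ² I)⁻¹ k(E,e) denotes the scalar GP posterior variance at a point e based on design points E, and E ⊆ E' (E' obtained by appending additional points), then k̄'(e,e) ≤ k̄(e,e), where k̄' is defined analogously with E' and the same kernel k and noise σ² > 0. -/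
open Matrix

/-- A positive definite kernel: every Gram matrix is positive semidefinite. -/
def IsPDKernel {X : Type*} (k : X → X → ℝ) : Prop :=
  ∀ (n : ℕ) (x : Fin n → X), (Matrix.of fun i j => k (x i) (x j)).PosSemidef

lemma smul_one_posDef {ι : Type*} [Fintype ι] [DecidableEq ι] {σ2 : ℝ} (hσ : 0 < σ2) :
    (σ2 • (1 : Matrix ι ι ℝ)).PosDef := by
  have h : (σ2 • (1 : Matrix ι ι ℝ)) = Matrix.diagonal (fun _ => σ2) := by
    ext i j
    simp [Matrix.one_apply, Matrix.diagonal_apply, mul_ite]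
  rw [h]
  exact Matrix.posDef_diagonal_iff.mpr (fun _ => hσ)

/-- Variational bound: for a positive definite real matrix `A`,
`2 v⬝x - xᵀAx ≤ vᵀA⁻¹v`. -/
lemma quad_bound {ι : Type*} [Fintype ι] [DecidableEq ι]
    (A : Matrix ι ι ℝ) (hA : A.PosDef) (v x : ι → ℝ) :
    2 * (v ⬝ᵥ x) - x ⬝ᵥ (A *ᵥ x) ≤ v ⬝ᵥ (A⁻¹ *ᵥ v) := by
  have hinv : A * A⁻¹ = 1 := Matrix.mul_nonsing_inv A (isUnit_iff_ne_zero.mpr hA.det_pos.ne')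
  set y : ι → ℝ := x - A⁻¹ *ᵥ v with hy
  have hAy : 0 ≤ y ⬝ᵥ (A *ᵥ y) := hA.posSemidef.dotProduct_mulVec_nonneg y
  have hsym : Aᵀ = A := by
    have h := hA.isHermitian.eq
    rwa [Matrix.conjTranspose_eq_transpose_of_trivial] at h
  have hAv : A *ᵥ (A⁻¹ *ᵥ v) = v := by
    rw [Matrix.mulVec_mulVec, hinv, Matrix.one_mulVec]
  have hexp : y ⬝ᵥ (A *ᵥ y)
      = x ⬝ᵥ (A *ᵥ x) - 2 * (v ⬝ᵥ x) + v ⬝ᵥ (A⁻¹ *ᵥ v) := by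
    have h1 : x ⬝ᵥ (A *ᵥ (A⁻¹ *ᵥ v)) = x ⬝ᵥ v := by rw [hAv]
    have h2 : (A⁻¹ *ᵥ v) ⬝ᵥ (A *ᵥ x) = x ⬝ᵥ v := by
      rw [Matrix.dotProduct_mulVec, ← Matrix.mulVec_transpose, hsym, hAv,
        dotProduct_comm]
    have h3 : (A⁻¹ *ᵥ v) ⬝ᵥ (A *ᵥ (A⁻¹ *ᵥ v)) = v ⬝ᵥ (A⁻¹ *ᵥ v) := by
      rw [hAv, dotProduct_comm]
    rw [hy]
    rw [Matrix.mulVec_sub, sub_dotProduct, dotProduct_sub,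
      dotProduct_sub, h1, h2, h3]
    have hvx : v ⬝ᵥ x = x ⬝ᵥ v := dotProduct_comm v x
    ring_nf
    rw [hvx]
    ring
  linarith [hexp ▸ hAy]

theorem stmt_13 (k : ℝ → ℝ → ℝ) (hk : IsPDKernel k)
    (σ2 : ℝ) (hσ : 0 < σ2) {n m : ℕ}
    (E : Fin n → ℝ) (E' : Fin n ⊕ Fin m → ℝ)
    (hEE' : ∀ i, E' (Sum.inl i) = E i) (e : ℝ) :
    k e e - (fun i => k e (E' i)) ⬝ᵥ
        ((Matrix.of fun i j => k (E' i) (E' j)) + σ2 • 1)⁻¹ *ᵥ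
        (fun i => k e (E' i)) ≤
      k e e - (fun i => k e (E i)) ⬝ᵥ
        ((Matrix.of fun i j => k (E i) (E j)) + σ2 • 1)⁻¹ *ᵥ
        (fun i => k e (E i)) := by
  set A : Matrix (Fin n) (Fin n) ℝ := (Matrix.of fun i j => k (E i) (E j)) + σ2 • 1 with hA
  set A' : Matrix (Fin n ⊕ Fin m) (Fin n ⊕ Fin m) ℝ :=
    (Matrix.of fun i j => k (E' i) (E' j)) + σ2 • 1 with hA'
  set v : Fin n → ℝ := fun i => k e (E i) with hv
  set v' : Fin n ⊕ Fin m → ℝ := fun i => k e (E' i) with hv'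
  -- PSD of Gram matrices
  have hG : (Matrix.of fun i j => k (E i) (E j)).PosSemidef := hk n E
  have hG' : (Matrix.of fun i j => k (E' i) (E' j)).PosSemidef := by
    have := (hk (n + m) (E' ∘ finSumFinEquiv.symm)).submatrix finSumFinEquiv
    convert this using 2
    ext i j
    simp
  have hApd : A.PosDef := Matrix.PosDef.posSemidef_add hG (smul_one_posDef hσ)
  have hA'pd : A'.PosDef := Matrix.PosDef.posSemidef_add hG' (smul_one_posDef hσ)
  -- it suffices to show v ⬝ A⁻¹ v ≤ v' ⬝ A'⁻¹ v'
  have key : v ⬝ᵥ (A⁻¹ *ᵥ v) ≤ v' ⬝ᵥ (A'⁻¹ *ᵥ v') := by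
    set x : Fin n → ℝ := A⁻¹ *ᵥ v with hx
    have hAx : A *ᵥ x = v := by
      rw [hx, Matrix.mulVec_mulVec, Matrix.mul_nonsing_inv A (isUnit_iff_ne_zero.mpr hApd.det_pos.ne'),
        Matrix.one_mulVec]
    set x' : Fin n ⊕ Fin m → ℝ := Sum.elim x 0 with hx'
    have hdot : v' ⬝ᵥ x' = v ⬝ᵥ x := by
      simp [dotProduct, Fintype.sum_sum_type, hx', hv', hv, hEE']
    have hblock : ∀ i, (A' *ᵥ x') (Sum.inl i) = (A *ᵥ x) i := by
      intro i
      simp only [Matrix.mulVec, dotProduct, Fintype.sum_sum_type, hx', hA', hA]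
      simp [Matrix.add_apply, Matrix.one_apply, hEE', Sum.inl.injEq]
    have hquad : x' ⬝ᵥ (A' *ᵥ x') = x ⬝ᵥ (A *ᵥ x) := by
      simp only [dotProduct, Fintype.sum_sum_type, hx']
      simp [← hx', hblock]
    have hb := quad_bound A' hA'pd v' x'
    rw [hdot, hquad] at hb
    have : 2 * (v ⬝ᵥ x) - x ⬝ᵥ (A *ᵥ x) = v ⬝ᵥ (A⁻¹ *ᵥ v) := by
      rw [hAx, dotProduct_comm x v]
      ring
    linarith
  linarith
end
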